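/- Let 0 < H < 1/2. For a, b > 0 define I(a,b) = ∫_0^∞ (1 - e^{-a ξ²})(1 - cos(b ξ)) ξ^{-1-2H} dξ. Then there exist positive constants c_H, C_H depending only on H such that c_H · min(a^H, b^{2H}) ≤ I(a,b) ≤ C_H · min(a^H, b^{2H}). -/

import Mathlib

open MeasureTheory Real Set


lemma one_sub_exp_nonneg {x : ℝ} (hx : 0 ≤ x) : 0 ≤ 1 - Real.exp (-x) := by
  have := Real.exp_le_one_iff.mpr (neg_nonpos.mpr hx); linarith

lemma one_sub_exp_le_one (x : ℝ) : 1 - Real.exp (-x) ≤ 1 := by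
  have := Real.exp_pos (-x); linarith

lemma one_sub_exp_le_self (x : ℝ) : 1 - Real.exp (-x) ≤ x := by
  have := Real.add_one_le_exp (-x); linarith

lemma one_sub_cos_nonneg (y : ℝ) : 0 ≤ 1 - Real.cos y := by
  have := Real.cos_le_one y; linarith

lemma one_sub_cos_le_two (y : ℝ) : 1 - Real.cos y ≤ 2 := by
  have := Real.neg_one_le_cos y; linarith

lemma one_sub_cos_le_sq (y : ℝ) : 1 - Real.cos y ≤ y ^ 2 := by
  have := Real.one_sub_sq_div_two_le_cos (x := y); nlinarith

lemma exp_neg_le_half {x : ℝ} (hx : 1 ≤ x) : Real.exp (-x) ≤ 1 / 2 := by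
  have h1 : Real.exp (-x) ≤ Real.exp (-1) := Real.exp_le_exp.mpr (by linarith)
  have h2 : Real.exp (-1) = (Real.exp 1)⁻¹ := by rw [Real.exp_neg]
  have h3 : (2:ℝ) ≤ Real.exp 1 := by
    have := Real.add_one_le_exp (1:ℝ); linarith
  have h4 : (Real.exp 1)⁻¹ ≤ 1/2 := by
    rw [inv_le_comm₀ (by positivity) (by norm_num)]; norm_num; linarith
  linarith

lemma aux_upper (H a b : ℝ) (hH0 : 0 < H) (hH2 : H < 1/2) (ha : 0 < a) (hb : 0 < b) :
    (∫⁻ ξ in Set.Ioi (0 : ℝ), ENNReal.ofReal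
        ((1 - Real.exp (-(a * ξ ^ 2))) * (1 - Real.cos (b * ξ)) * ξ ^ (-1 - 2 * H)))
      ≤ ENNReal.ofReal ((1/(1-H) + 1/H) * (min a (b^2)) ^ H) := by
  set s : ℝ := min a (b^2) with hs_def
  have hs : 0 < s := lt_min ha (by positivity)
  set T : ℝ := s ^ (-(1/2) : ℝ) with hT_def
  have hT : 0 < T := Real.rpow_pos_of_pos hs _
  -- split
  rw [show Set.Ioi (0:ℝ) = Set.Ioc 0 T ∪ Set.Ioi T from (Set.Ioc_union_Ioi_eq_Ioi hT.le).symm,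
    lintegral_union measurableSet_Ioi (Set.Ioc_disjoint_Ioi le_rfl)]
  -- piece 1
  have h1 : (∫⁻ ξ in Set.Ioc (0:ℝ) T, ENNReal.ofReal
        ((1 - Real.exp (-(a * ξ ^ 2))) * (1 - Real.cos (b * ξ)) * ξ ^ (-1 - 2 * H)))
      ≤ ENNReal.ofReal ((1/(1-H)) * s ^ H) := by
    have hmono : (∫⁻ ξ in Set.Ioc (0:ℝ) T, ENNReal.ofReal
          ((1 - Real.exp (-(a * ξ ^ 2))) * (1 - Real.cos (b * ξ)) * ξ ^ (-1 - 2 * H)))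
        ≤ ∫⁻ ξ in Set.Ioc (0:ℝ) T, ENNReal.ofReal (2 * s * ξ ^ (1 - 2*H)) := by
      refine setLIntegral_mono' measurableSet_Ioc fun ξ hξ => ENNReal.ofReal_le_ofReal ?_
      have hξ0 : 0 < ξ := hξ.1
      have key : (1 - Real.exp (-(a * ξ ^ 2))) * (1 - Real.cos (b * ξ)) ≤ 2 * s * ξ ^ 2 := by
        have e1 := one_sub_exp_le_one (a * ξ ^ 2)
        have e2 := one_sub_exp_le_self (a * ξ ^ 2)
        have e3 := one_sub_exp_nonneg (x := a * ξ ^ 2) (by positivity)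
        have c1 := one_sub_cos_le_two (b * ξ)
        have c2 := one_sub_cos_le_sq (b * ξ)
        have c3 := one_sub_cos_nonneg (b * ξ)
        rcases min_le_iff.mp (le_refl s) with h | h
        · rcases le_total a (b^2) with hab | hab
          · have hsa : s = a := min_eq_left hab
            nlinarith
          · have hsb : s = b^2 := min_eq_right hab
            have : (b*ξ)^2 = b^2 * ξ^2 := by ring
            nlinarith
        · rcases le_total a (b^2) with hab | hab
          · have hsa : s = a := min_eq_left hab
            nlinarith
          · have hsb : s = b^2 := min_eq_right hab
            nlinarith
      have hpow : ξ ^ (2:ℝ) * ξ ^ (-1 - 2*H) = ξ ^ (1 - 2*H) := by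
        rw [← Real.rpow_add hξ0]; ring_nf
      have hξ2 : ξ ^ (2:ℝ) = ξ ^ (2:ℕ) := by
        rw [show ((2:ℝ)) = ((2:ℕ):ℝ) by norm_num, Real.rpow_natCast]
      calc (1 - Real.exp (-(a * ξ ^ 2))) * (1 - Real.cos (b * ξ)) * ξ ^ (-1 - 2 * H)
          ≤ (2 * s * ξ ^ 2) * ξ ^ (-1 - 2 * H) := by
            have : (0:ℝ) ≤ ξ ^ (-1 - 2*H) := (Real.rpow_pos_of_pos hξ0 _).le
            exact mul_le_mul_of_nonneg_right key this
        _ = 2 * s * ξ ^ (1 - 2*H) := by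
            rw [← hξ2, mul_assoc, hpow]
    have hint : IntegrableOn (fun ξ : ℝ => 2 * s * ξ ^ (1 - 2*H)) (Set.Ioc 0 T) := by
      have : IntervalIntegrable (fun ξ : ℝ => ξ ^ (1 - 2*H)) volume 0 T :=
        intervalIntegral.intervalIntegrable_rpow' (by linarith)
      exact ((intervalIntegrable_iff_integrableOn_Ioc_of_le hT.le).mp this).const_mul _
    have heq : (∫⁻ ξ in Set.Ioc (0:ℝ) T, ENNReal.ofReal (2 * s * ξ ^ (1 - 2*H)))
        = ENNReal.ofReal (∫ ξ in Set.Ioc (0:ℝ) T, 2 * s * ξ ^ (1 - 2*H)) := by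
      rw [← ofReal_integral_eq_lintegral_ofReal hint]
      filter_upwards [self_mem_ae_restrict measurableSet_Ioc] with ξ hξ
      have : (0:ℝ) < ξ := hξ.1
      positivity
    have hval : (∫ ξ in Set.Ioc (0:ℝ) T, 2 * s * ξ ^ (1 - 2*H)) = (1/(1-H)) * s ^ H := by
      rw [← intervalIntegral.integral_of_le hT.le, intervalIntegral.integral_const_mul,
        integral_rpow (Or.inl (by linarith))]
      have hz : (0:ℝ) ^ (1 - 2*H + 1) = 0 := Real.zero_rpow (by linarith)
      rw [hz]
      have hTpow : T ^ (1 - 2*H + 1) = s ^ (H - 1) := by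
        rw [hT_def, ← Real.rpow_mul hs.le]
        norm_num; ring_nf
      rw [hTpow]
      have hss : s * s ^ (H - 1) = s ^ H := by
        nth_rewrite 1 [← Real.rpow_one s]
        rw [← Real.rpow_add hs]; ring_nf
      rw [sub_zero]
      have hne1 : (1:ℝ) - 2*H + 1 ≠ 0 := by linarith
      have hne2 : (1:ℝ) - H ≠ 0 := by linarith
      field_simp
      linear_combination (2 - 2*H) * hss
    rw [heq, hval] at hmono
    exact hmono
  have h2 : (∫⁻ ξ in Set.Ioi T, ENNReal.ofReal
        ((1 - Real.exp (-(a * ξ ^ 2))) * (1 - Real.cos (b * ξ)) * ξ ^ (-1 - 2 * H)))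
      ≤ ENNReal.ofReal ((1/H) * s ^ H) := by
    have hmono : (∫⁻ ξ in Set.Ioi T, ENNReal.ofReal
          ((1 - Real.exp (-(a * ξ ^ 2))) * (1 - Real.cos (b * ξ)) * ξ ^ (-1 - 2 * H)))
        ≤ ∫⁻ ξ in Set.Ioi T, ENNReal.ofReal (2 * ξ ^ (-1 - 2*H)) := by
      refine setLIntegral_mono' measurableSet_Ioi fun ξ hξ => ENNReal.ofReal_le_ofReal ?_
      have hξ0 : 0 < ξ := hT.trans hξ
      have key : (1 - Real.exp (-(a * ξ ^ 2))) * (1 - Real.cos (b * ξ)) ≤ 2 := by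
        have e1 := one_sub_exp_le_one (a * ξ ^ 2)
        have e3 := one_sub_exp_nonneg (x := a * ξ ^ 2) (by positivity)
        have c1 := one_sub_cos_le_two (b * ξ)
        have c3 := one_sub_cos_nonneg (b * ξ)
        nlinarith
      have hw : (0:ℝ) ≤ ξ ^ (-1 - 2*H) := (Real.rpow_pos_of_pos hξ0 _).le
      exact mul_le_mul_of_nonneg_right key hw
    have hint : IntegrableOn (fun ξ : ℝ => 2 * ξ ^ (-1 - 2*H)) (Set.Ioi T) :=
      (integrableOn_Ioi_rpow_of_lt (by linarith) hT).const_mul 2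
    have heq : (∫⁻ ξ in Set.Ioi T, ENNReal.ofReal (2 * ξ ^ (-1 - 2*H)))
        = ENNReal.ofReal (∫ ξ in Set.Ioi T, 2 * ξ ^ (-1 - 2*H)) := by
      rw [← ofReal_integral_eq_lintegral_ofReal hint]
      filter_upwards [self_mem_ae_restrict measurableSet_Ioi] with ξ hξ
      have : (0:ℝ) < ξ := hT.trans hξ
      positivity
    have hval : (∫ ξ in Set.Ioi T, 2 * ξ ^ (-1 - 2*H)) = (1/H) * s ^ H := by
      rw [MeasureTheory.integral_const_mul, integral_Ioi_rpow_of_lt (by linarith) hT]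
      have hTpow : T ^ (-1 - 2*H + 1) = s ^ H := by
        rw [hT_def, ← Real.rpow_mul hs.le]
        ring_nf
      rw [hTpow]
      have hne : H ≠ 0 := ne_of_gt hH0
      rw [show (-1-2*H+1 : ℝ) = -(2*H) by ring]
      field_simp
    rw [heq, hval] at hmono
    exact hmono
  have hnn : (0:ℝ) ≤ s ^ H := (Real.rpow_pos_of_pos hs H).le
  calc (∫⁻ ξ in Set.Ioc (0:ℝ) T, ENNReal.ofReal
        ((1 - Real.exp (-(a * ξ ^ 2))) * (1 - Real.cos (b * ξ)) * ξ ^ (-1 - 2 * H)))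
      + (∫⁻ ξ in Set.Ioi T, ENNReal.ofReal
        ((1 - Real.exp (-(a * ξ ^ 2))) * (1 - Real.cos (b * ξ)) * ξ ^ (-1 - 2 * H)))
      ≤ ENNReal.ofReal ((1/(1-H)) * s ^ H) + ENNReal.ofReal ((1/H) * s ^ H) :=
        add_le_add h1 h2
    _ = ENNReal.ofReal ((1/(1-H) + 1/H) * s ^ H) := by
        rw [← ENNReal.ofReal_add (mul_nonneg (div_nonneg zero_le_one (by linarith)) hnn)
          (mul_nonneg (div_nonneg zero_le_one hH0.le) hnn)]
        ring_nf

lemma aux_lower_b (H a b : ℝ) (hH0 : 0 < H) (ha : 0 < a) (hb : 0 < b) (hab : b^2 ≤ a) :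
    ENNReal.ofReal ((π/2) * (3*π/2) ^ (-1-2*H) * b ^ (2*H))
      ≤ ∫⁻ ξ in Set.Ioi (0 : ℝ), ENNReal.ofReal
          ((1 - Real.exp (-(a * ξ ^ 2))) * (1 - Real.cos (b * ξ)) * ξ ^ (-1 - 2 * H)) := by
  have hπ := Real.pi_pos
  have hπ3 := Real.pi_gt_three
  set l : ℝ := π/(2*b) with hl_def
  set r : ℝ := 3*π/(2*b) with hr_def
  have hl : 0 < l := by positivity
  have hr : 0 < r := by positivity
  have hlr : l ≤ r := by
    rw [hl_def, hr_def]; gcongr; linarith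
  have hsub : Set.Ioc l r ⊆ Set.Ioi (0:ℝ) := fun x hx => hl.trans hx.1
  set K : ℝ := (1/2) * r ^ (-1-2*H) with hK_def
  have hKpos : 0 < K := by
    have := Real.rpow_pos_of_pos hr (-1-2*H); positivity
  have step1 : ∀ ξ ∈ Set.Ioc l r, ENNReal.ofReal K ≤ ENNReal.ofReal
      ((1 - Real.exp (-(a * ξ ^ 2))) * (1 - Real.cos (b * ξ)) * ξ ^ (-1 - 2 * H)) := by
    intro ξ hξ
    have hξ0 : 0 < ξ := hl.trans hξ.1
    apply ENNReal.ofReal_le_ofReal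
    have hbξ1 : π/2 ≤ b * ξ := by
      have : π/2 = b * l := by rw [hl_def]; field_simp
      rw [this]
      exact (mul_le_mul_iff_right₀ hb).mpr hξ.1.le
    have hbξ2 : b * ξ ≤ π + π/2 := by
      have : b * r = π + π/2 := by rw [hr_def]; field_simp; ring
      rw [← this]
      exact (mul_le_mul_iff_right₀ hb).mpr hξ.2
    have hcos : Real.cos (b * ξ) ≤ 0 :=
      Real.cos_nonpos_of_pi_div_two_le_of_le hbξ1 hbξ2
    have haξ : 1 ≤ a * ξ ^ 2 := by
      have h2 : (b*ξ)^2 ≤ a * ξ^2 := by nlinarith [sq_nonneg ξ]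
      have h3 : (3/2:ℝ) ≤ b * ξ := by linarith
      nlinarith
    have hexp : (1:ℝ)/2 ≤ 1 - Real.exp (-(a * ξ ^ 2)) := by
      have := exp_neg_le_half haξ; linarith
    have hw : r ^ (-1-2*H) ≤ ξ ^ (-1-2*H) :=
      Real.rpow_le_rpow_of_nonpos hξ0 hξ.2 (by linarith)
    have hwpos : (0:ℝ) < ξ ^ (-1-2*H) := Real.rpow_pos_of_pos hξ0 _
    have hrpos : (0:ℝ) < r ^ (-1-2*H) := Real.rpow_pos_of_pos hr _
    have h2 : (1:ℝ) ≤ 1 - Real.cos (b * ξ) := by linarith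
    have hE : 0 ≤ 1 - Real.exp (-(a * ξ ^ 2)) := one_sub_exp_nonneg (by positivity)
    calc K = (1/2) * r ^ (-1-2*H) := hK_def
      _ ≤ (1/2) * ξ ^ (-1-2*H) := by nlinarith
      _ ≤ ((1 - Real.exp (-(a * ξ ^ 2))) * (1 - Real.cos (b * ξ))) * ξ ^ (-1-2*H) := by
          have hprod : (1:ℝ)/2 ≤ (1 - Real.exp (-(a * ξ ^ 2))) * (1 - Real.cos (b * ξ)) := by
            nlinarith
          exact mul_le_mul_of_nonneg_right hprod hwpos.le
      _ = (1 - Real.exp (-(a * ξ ^ 2))) * (1 - Real.cos (b * ξ)) * ξ ^ (-1 - 2 * H) := by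
          ring_nf
  have step2 : ENNReal.ofReal K * ENNReal.ofReal (r - l)
      ≤ ∫⁻ ξ in Set.Ioc l r, ENNReal.ofReal
          ((1 - Real.exp (-(a * ξ ^ 2))) * (1 - Real.cos (b * ξ)) * ξ ^ (-1 - 2 * H)) := by
    have := setLIntegral_mono' (μ := volume) (f := fun _ => ENNReal.ofReal K) measurableSet_Ioc step1
    rwa [setLIntegral_const, Real.volume_Ioc] at this
  have hrl : r - l = π / b := by rw [hl_def, hr_def]; field_simp; ring
  have hfinal : (π/2) * (3*π/2) ^ (-1-2*H) * b ^ (2*H) = K * (r - l) := by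
    rw [hrl, hK_def, hr_def]
    have e1 : (3*π/(2*b)) ^ (-1-2*H) = (3*π/2) ^ (-1-2*H) * b ^ (1+2*H) := by
      rw [show 3*π/(2*b) = (3*π/2)/b by ring, Real.div_rpow (by positivity) hb.le,
        show (-1-2*H : ℝ) = -(1+2*H) by ring, Real.rpow_neg hb.le, div_eq_mul_inv, inv_inv]
    rw [e1]
    have e2 : b ^ (1+2*H) = b * b ^ (2*H) := by
      rw [Real.rpow_add hb, Real.rpow_one]
    rw [e2]
    field_simp
  calc ENNReal.ofReal ((π/2) * (3*π/2) ^ (-1-2*H) * b ^ (2*H))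
      = ENNReal.ofReal K * ENNReal.ofReal (r - l) := by
        rw [← ENNReal.ofReal_mul hKpos.le, hfinal]
    _ ≤ ∫⁻ ξ in Set.Ioc l r, ENNReal.ofReal
          ((1 - Real.exp (-(a * ξ ^ 2))) * (1 - Real.cos (b * ξ)) * ξ ^ (-1 - 2 * H)) := step2
    _ ≤ ∫⁻ ξ in Set.Ioi (0:ℝ), ENNReal.ofReal
          ((1 - Real.exp (-(a * ξ ^ 2))) * (1 - Real.cos (b * ξ)) * ξ ^ (-1 - 2 * H)) :=
        lintegral_mono_set hsub

lemma aux_lower_a (H a b : ℝ) (hH0 : 0 < H) (ha : 0 < a) (hb : 0 < b) (hab : a ≤ b^2) :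
    ENNReal.ofReal ((5:ℝ) ^ (-1-2*H) * a ^ H)
      ≤ ∫⁻ ξ in Set.Ioi (0 : ℝ), ENNReal.ofReal
          ((1 - Real.exp (-(a * ξ ^ 2))) * (1 - Real.cos (b * ξ)) * ξ ^ (-1 - 2 * H)) := by
  set rr : ℝ := a ^ (-(1/2) : ℝ) with hrr_def
  have hr : 0 < rr := Real.rpow_pos_of_pos ha _
  have hsqrt : a ^ ((1/2):ℝ) ≤ b := by
    have h1 : a ^ ((1/2):ℝ) ≤ (b^2) ^ ((1/2):ℝ) := Real.rpow_le_rpow ha.le hab (by norm_num)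
    have h2 : (b^2) ^ ((1/2):ℝ) = b := by
      rw [← Real.rpow_natCast b 2, ← Real.rpow_mul hb.le]
      norm_num
    linarith [h2 ▸ h1]
  have hbr : 1/b ≤ rr := by
    rw [hrr_def, show (-(1/2):ℝ) = -(1/2) from rfl, Real.rpow_neg ha.le, one_div]
    exact inv_anti₀ (Real.rpow_pos_of_pos ha _) hsqrt
  have hrr2 : a * rr ^ 2 = 1 := by
    rw [hrr_def, ← Real.rpow_natCast (a ^ (-(1/2):ℝ)) 2, ← Real.rpow_mul ha.le]
    norm_num
    rw [Real.rpow_neg_one]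
    exact mul_inv_cancel₀ ha.ne'
  have hsub : Set.Ioc rr (5*rr) ⊆ Set.Ioi (0:ℝ) := fun x hx => hr.trans hx.1
  set w : ℝ := (1/2) * (5*rr) ^ (-1-2*H) with hw_def
  have hwpos : 0 < w := by
    have := Real.rpow_pos_of_pos (by linarith : (0:ℝ) < 5*rr) (-1-2*H); positivity
  -- pointwise bound on J
  have step1 : ∀ ξ ∈ Set.Ioc rr (5*rr), ENNReal.ofReal (w * (1 - Real.cos (b*ξ)))
      ≤ ENNReal.ofReal
        ((1 - Real.exp (-(a * ξ ^ 2))) * (1 - Real.cos (b * ξ)) * ξ ^ (-1 - 2 * H)) := by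
    intro ξ hξ
    have hξ0 : 0 < ξ := hr.trans hξ.1
    apply ENNReal.ofReal_le_ofReal
    have haξ : 1 ≤ a * ξ ^ 2 := by nlinarith [hξ.1, hr, sq_nonneg (ξ - rr)]
    have hexp : (1:ℝ)/2 ≤ 1 - Real.exp (-(a * ξ ^ 2)) := by
      have := exp_neg_le_half haξ; linarith
    have hwle : (5*rr) ^ (-1-2*H) ≤ ξ ^ (-1-2*H) :=
      Real.rpow_le_rpow_of_nonpos hξ0 hξ.2 (by linarith)
    have h5pos : (0:ℝ) < (5*rr) ^ (-1-2*H) := Real.rpow_pos_of_pos (by linarith) _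
    have hcosnn := one_sub_cos_nonneg (b*ξ)
    have h5 : (1/2) * (5*rr) ^ (-1-2*H) ≤ (1 - Real.exp (-(a * ξ ^ 2))) * ξ ^ (-1-2*H) :=
      mul_le_mul hexp hwle h5pos.le (by linarith)
    calc w * (1 - Real.cos (b*ξ)) ≤ ((1 - Real.exp (-(a * ξ ^ 2))) * ξ ^ (-1-2*H)) * (1 - Real.cos (b*ξ)) :=
          mul_le_mul_of_nonneg_right h5 hcosnn
      _ = (1 - Real.exp (-(a * ξ ^ 2))) * (1 - Real.cos (b * ξ)) * ξ ^ (-1 - 2 * H) := by ring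
  -- the lower function is integrable and we can compute its integral
  have hgc : Continuous (fun ξ : ℝ => w * (1 - Real.cos (b*ξ))) :=
    continuous_const.mul (continuous_const.sub
      (Real.continuous_cos.comp (continuous_const.mul continuous_id)))
  have hint : IntegrableOn (fun ξ : ℝ => w * (1 - Real.cos (b*ξ))) (Set.Ioc rr (5*rr)) :=
    hgc.integrableOn_Ioc
  have heq : (∫⁻ ξ in Set.Ioc rr (5*rr), ENNReal.ofReal (w * (1 - Real.cos (b*ξ))))
      = ENNReal.ofReal (∫ ξ in Set.Ioc rr (5*rr), w * (1 - Real.cos (b*ξ))) := by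
    rw [← ofReal_integral_eq_lintegral_ofReal hint]
    filter_upwards with ξ
    have := one_sub_cos_nonneg (b*ξ)
    positivity
  have hval : (5:ℝ) ^ (-1-2*H) * a ^ H ≤ ∫ ξ in Set.Ioc rr (5*rr), w * (1 - Real.cos (b*ξ)) := by
    rw [← intervalIntegral.integral_of_le (by linarith : rr ≤ 5*rr),
      intervalIntegral.integral_const_mul]
    have hcosint : (∫ ξ in rr..(5*rr), Real.cos (b*ξ))
        = b⁻¹ * (Real.sin (b*(5*rr)) - Real.sin (b*rr)) := by
      rw [intervalIntegral.integral_comp_mul_left (fun x => Real.cos x) hb.ne',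
        integral_cos, smul_eq_mul]
    have hsplit : (∫ ξ in rr..(5*rr), (1 - Real.cos (b*ξ)))
        = (4*rr) - b⁻¹ * (Real.sin (b*(5*rr)) - Real.sin (b*rr)) := by
      have hcc : Continuous fun ξ : ℝ => Real.cos (b*ξ) :=
        Real.continuous_cos.comp (continuous_const.mul continuous_id)
      rw [intervalIntegral.integral_sub intervalIntegrable_const (hcc.intervalIntegrable _ _),
        intervalIntegral.integral_const, hcosint]
      simp; ring
    have hbound : 2*rr ≤ ∫ ξ in rr..(5*rr), (1 - Real.cos (b*ξ)) := by
      rw [hsplit]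
      have s1 := Real.neg_one_le_sin (b*(5*rr))
      have s2 := Real.sin_le_one (b*rr)
      have s3 := Real.sin_le_one (b*(5*rr))
      have s4 := Real.neg_one_le_sin (b*rr)
      have hbinv : b⁻¹ ≤ rr := by rw [← one_div]; exact hbr
      have hbinv0 : 0 < b⁻¹ := by positivity
      nlinarith
    have hwrr : w * (2*rr) = (5:ℝ) ^ (-1-2*H) * a ^ H := by
      rw [hw_def]
      have e1 : (5*rr) ^ (-1-2*H) = 5 ^ (-1-2*H) * rr ^ (-1-2*H) :=
        Real.mul_rpow (by norm_num) hr.le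
      have e2 : rr ^ (-1-2*H) * rr = rr ^ (-2*H) := by
        nth_rewrite 2 [← Real.rpow_one rr]
        rw [← Real.rpow_add hr]; ring_nf
      have e3 : rr ^ (-2*H) = a ^ H := by
        rw [hrr_def, ← Real.rpow_mul ha.le]; ring_nf
      calc (1/2) * (5*rr) ^ (-1-2*H) * (2*rr)
          = 5 ^ (-1-2*H) * (rr ^ (-1-2*H) * rr) := by rw [e1]; ring
        _ = 5 ^ (-1-2*H) * a ^ H := by rw [e2, e3]
    calc (5:ℝ) ^ (-1-2*H) * a ^ H = w * (2*rr) := hwrr.symm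
      _ ≤ w * ∫ ξ in rr..(5*rr), (1 - Real.cos (b*ξ)) :=
          mul_le_mul_of_nonneg_left hbound hwpos.le
  calc ENNReal.ofReal ((5:ℝ) ^ (-1-2*H) * a ^ H)
      ≤ ENNReal.ofReal (∫ ξ in Set.Ioc rr (5*rr), w * (1 - Real.cos (b*ξ))) :=
        ENNReal.ofReal_le_ofReal hval
    _ = ∫⁻ ξ in Set.Ioc rr (5*rr), ENNReal.ofReal (w * (1 - Real.cos (b*ξ))) := heq.symm
    _ ≤ ∫⁻ ξ in Set.Ioc rr (5*rr), ENNReal.ofReal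
          ((1 - Real.exp (-(a * ξ ^ 2))) * (1 - Real.cos (b * ξ)) * ξ ^ (-1 - 2 * H)) :=
        setLIntegral_mono' measurableSet_Ioc step1
    _ ≤ ∫⁻ ξ in Set.Ioi (0:ℝ), ENNReal.ofReal
          ((1 - Real.exp (-(a * ξ ^ 2))) * (1 - Real.cos (b * ξ)) * ξ ^ (-1 - 2 * H)) :=
        lintegral_mono_set hsub


/-- For `H ∈ (0,1/2)` and `I(a,b) = ∫_0^∞ (1-e^{-aξ²})(1-cos(bξ)) ξ^{-1-2H} dξ`,
one has `c_H min(a^H, b^{2H}) ≤ I(a,b) ≤ C_H min(a^H, b^{2H})` for all `a, b > 0`. -/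
theorem stmt14 (H : ℝ) (hH : H ∈ Set.Ioo (0 : ℝ) (1 / 2)) :
    ∃ c C : ℝ, 0 < c ∧ 0 < C ∧ ∀ a b : ℝ, 0 < a → 0 < b →
      ENNReal.ofReal (c * min (a ^ H) (b ^ (2 * H)))
        ≤ (∫⁻ ξ in Set.Ioi (0 : ℝ), ENNReal.ofReal
            ((1 - Real.exp (-(a * ξ ^ 2))) * (1 - Real.cos (b * ξ)) * ξ ^ (-1 - 2 * H))) ∧
      (∫⁻ ξ in Set.Ioi (0 : ℝ), ENNReal.ofReal
            ((1 - Real.exp (-(a * ξ ^ 2))) * (1 - Real.cos (b * ξ)) * ξ ^ (-1 - 2 * H)))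
        ≤ ENNReal.ofReal (C * min (a ^ H) (b ^ (2 * H))) := by
  obtain ⟨hH0, hH2⟩ := hH
  have hπ := Real.pi_pos
  refine ⟨min ((π/2) * (3*π/2) ^ (-1-2*H)) ((5:ℝ) ^ (-1-2*H)), 1/(1-H) + 1/H, ?_, ?_, ?_⟩
  · apply lt_min
    · have := Real.rpow_pos_of_pos (by positivity : (0:ℝ) < 3*π/2) (-1-2*H)
      positivity
    · exact Real.rpow_pos_of_pos (by norm_num) _
  · have h1 : (0:ℝ) < 1/(1-H) := by
      apply div_pos one_pos; linarith
    have h2 : (0:ℝ) < 1/H := by positivity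
    linarith
  intro a b ha hb
  have hb2 : b ^ (2*H) = (b^2 : ℝ) ^ H := by
    rw [← Real.rpow_natCast b 2, ← Real.rpow_mul hb.le]
    norm_num
  have hminnn : (0:ℝ) ≤ min (a ^ H) (b ^ (2*H)) :=
    le_min (Real.rpow_pos_of_pos ha _).le (Real.rpow_pos_of_pos hb _).le
  have hmin : min (a ^ H) (b ^ (2*H)) = (min a (b^2)) ^ H := by
    rw [hb2]
    rcases le_total a (b^2) with h | h
    · rw [min_eq_left h, min_eq_left (Real.rpow_le_rpow ha.le h hH0.le)]
    · rw [min_eq_right h, min_eq_right (Real.rpow_le_rpow (by positivity) h hH0.le)]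
  constructor
  · -- lower bound
    rcases le_total a (b^2) with h | h
    · refine le_trans (ENNReal.ofReal_le_ofReal ?_) (aux_lower_a H a b hH0 ha hb h)
      have h5 : (0:ℝ) < (5:ℝ) ^ (-1-2*H) := Real.rpow_pos_of_pos (by norm_num) _
      exact mul_le_mul (min_le_right _ _) (min_le_left _ _) hminnn h5.le
    · refine le_trans (ENNReal.ofReal_le_ofReal ?_) (aux_lower_b H a b hH0 ha hb h)
      have hc1 : (0:ℝ) ≤ (π/2) * (3*π/2) ^ (-1-2*H) := by
        have := Real.rpow_pos_of_pos (by positivity : (0:ℝ) < 3*π/2) (-1-2*H)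
        positivity
      exact mul_le_mul (min_le_left _ _) (min_le_right _ _) hminnn hc1
  · -- upper bound
    refine le_trans (aux_upper H a b hH0 hH2 ha hb) (le_of_eq ?_)
    rw [hmin]
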